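/- arXiv:2505.15321 — 4 statements merged into one kernel-verified Lean document; each statement's English description precedes it below -/
import Mathlib

section
/- For every infinite-dimensional closed subspace H_0 of a separable Hilbert space H, there exists a complete minimal system {x_k}_{k=1}^∞ in H whose biorthogonal system {x_k*} has closed linear span exactly H_0. -/
open Filter Topology

noncomputable section

variable {H : Type*} [NormedAddCommGroup H] [InnerProductSpace ℂ H] [CompleteSpace H]

/-- Closed linear span of a set of vectors. -/
def clSpan (s : Set H) : Submodule ℂ H := (Submodule.span ℂ s).topologicalClosure

instance (s : Set H) : CompleteSpace (clSpan s) :=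
  (Submodule.isClosed_topologicalClosure _).completeSpace_coe

/-- Orthogonal projection onto the closed linear span of `s`, as a map `H → H`. -/
def projS (s : Set H) : H →L[ℂ] H :=
  (clSpan s).subtypeL ∘L (clSpan s).orthogonalProjection

/-- The system `x` is complete: its closed linear span is all of `H`. -/
def IsCompleteSystem (x : ℕ → H) : Prop := clSpan (Set.range x) = ⊤

/-- The system `x` is minimal: no vector lies in the closed span of the others. -/
def IsMinimalSystem (x : ℕ → H) : Prop :=
  ∀ k, x k ∉ clSpan (x '' {j | j ≠ k})

/-- `y` is biorthogonal to `x`. -/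
def IsBiorthogonal (x y : ℕ → H) : Prop :=
  ∀ k j, (inner ℂ (x k) (y j) : ℂ) = if k = j then 1 else 0
/-- (Young) For every infinite-dimensional closed subspace `H₀` of a separable
infinite-dimensional Hilbert space `H`, there is a complete minimal system `{x_k}`
whose biorthogonal system `{x_k^*}` has closed linear span exactly `H₀`. -/
theorem exists_complete_minimal_with_biorthogonal_span
    [TopologicalSpace.SeparableSpace H] (hH : ¬ FiniteDimensional ℂ H)
    (H₀ : Submodule ℂ H) (hcl : IsClosed (H₀ : Set H))
    (hinf : ¬ FiniteDimensional ℂ H₀) :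
    ∃ x y : ℕ → H, IsCompleteSystem x ∧ IsMinimalSystem x ∧ IsBiorthogonal x y ∧
      clSpan (Set.range y) = H₀ := by
  haveI : SecondCountableTopology H := UniformSpace.secondCountable_of_separable H
  haveI : CompleteSpace H₀ := hcl.completeSpace_coe
  -- a Hilbert basis of `H₀`, indexed by a set `w`
  obtain ⟨w, b0, hb0⟩ := exists_hilbertBasis ℂ H₀
  have hwo : Orthonormal ℂ ((↑) : w → H₀) := hb0 ▸ b0.orthonormal
  -- `w` is countable
  have hwc : w.Countable := by
    have hdisj : w.PairwiseDisjoint (fun x : H₀ => Metric.ball x (1/2)) := by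
      intro x hx y hy hxy
      refine Metric.ball_disjoint_ball ?_
      have h1 : (inner ℂ x y : ℂ) = 0 := hwo.2 (i := ⟨x, hx⟩) (j := ⟨y, hy⟩) (by simpa using hxy)
      have hx1 : ‖x‖ = 1 := by simpa using hwo.1 ⟨x, hx⟩
      have hy1 : ‖y‖ = 1 := by simpa using hwo.1 ⟨y, hy⟩
      have h2 : ‖x - y‖ ^ 2 = 2 := by
        rw [@norm_sub_sq ℂ]
        simp [h1, hx1, hy1]; norm_num
      have hn : (0:ℝ) ≤ ‖x - y‖ := norm_nonneg _
      have h3 : (1:ℝ) ≤ ‖x - y‖ := by nlinarith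
      calc (1:ℝ)/2 + 1/2 = 1 := by norm_num
        _ ≤ dist x y := by rwa [dist_eq_norm]
    exact hdisj.countable_of_isOpen (fun i _ => Metric.isOpen_ball)
      (fun i _ => Metric.nonempty_ball.2 (by norm_num))
  -- `w` is infinite
  have hwi : w.Infinite := by
    by_contra hfin
    rw [Set.not_infinite] at hfin
    have h1 : FiniteDimensional ℂ (Submodule.span ℂ (Set.range ((↑) : w → H₀))) := by
      rw [Subtype.range_coe]
      exact FiniteDimensional.span_of_finite ℂ hfin
    have h2 : (Submodule.span ℂ (Set.range ((↑) : w → H₀))).topologicalClosure = ⊤ := by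
      rw [← hb0]; exact b0.dense_span
    rw [(Submodule.span ℂ (Set.range ((↑) : w → H₀))).closed_of_finiteDimensional.submodule_topologicalClosure_eq] at h2
    rw [h2] at h1
    exact hinf ((Submodule.topEquiv (R := ℂ) (M := H₀)).finiteDimensional)
  -- reindex to get a Hilbert basis indexed by `ℕ`
  haveI := hwc.to_subtype
  haveI := hwi.to_subtype
  haveI : Encodable ↥w := Encodable.ofCountable _
  haveI : Denumerable ↥w := Denumerable.ofEncodableOfInfinite ↥w
  let eqv : ℕ ≃ ↥w := (Denumerable.eqv ↥w).symm
  have hrange : Set.range (fun n => ((eqv n : w) : H₀)) = Set.range ((↑) : w → H₀) := by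
    rw [show (fun n => ((eqv n : w) : H₀)) = ((↑) : w → H₀) ∘ eqv from rfl,
      Set.range_comp, Equiv.range_eq_univ, Set.image_univ]
  have hbon : Orthonormal ℂ (fun n => ((eqv n : w) : H₀)) :=
    hwo.comp eqv eqv.injective
  have hbsp : ⊤ ≤ (Submodule.span ℂ (Set.range (fun n => ((eqv n : w) : H₀)))).topologicalClosure := by
    rw [hrange, ← hb0]
    exact b0.dense_span.ge
  let b : HilbertBasis ℕ ℂ H₀ := HilbertBasis.mk hbon hbsp
  have hbco : ∀ n, (b n : H₀) = ((eqv n : w) : H₀) := fun n => congrFun (HilbertBasis.coe_mk hbon hbsp) n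
  -- a dense sequence in the orthogonal complement
  obtain ⟨u, hu⟩ := TopologicalSpace.exists_dense_seq (H₀ᗮ : Submodule ℂ H)
  set e : ℕ → H := fun n => (b n : H) with he
  set v : ℕ → H := fun n => (u n.unpair.1 : H) with hv
  set x : ℕ → H := fun n => e n + v n with hx
  have hem : ∀ n, e n ∈ H₀ := fun n => (b n).2
  have hvm : ∀ n, v n ∈ H₀ᗮ := fun n => (u n.unpair.1).2
  -- biorthogonality
  have hbi : IsBiorthogonal x e := by
    intro k j
    have h1 : (inner ℂ (v k) (e j) : ℂ) = 0 :=
      Submodule.inner_left_of_mem_orthogonal (hem j) (hvm k)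
    have h2 : (inner ℂ (e k) (e j) : ℂ) = if k = j then 1 else 0 := by
      rw [he]
      change (inner ℂ ((b k : H₀) : H) ((b j : H₀) : H) : ℂ) = _
      rw [← Submodule.coe_inner]
      exact orthonormal_iff_ite.mp b.orthonormal k j
    simp [hx, inner_add_left, h1, h2]
  -- minimality
  have hmin : IsMinimalSystem x := by
    intro k hk
    have hker : clSpan (x '' {j | j ≠ k}) ≤ (innerSL ℂ (e k)).ker := by
      apply Submodule.topologicalClosure_minimal
      · rw [Submodule.span_le]
        rintro - ⟨j, hj, rfl⟩
        have hkj := hbi j k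
        rw [if_neg hj] at hkj
        simp only [SetLike.mem_coe, LinearMap.mem_ker, ContinuousLinearMap.coe_coe, innerSL_apply_apply]
        rw [← inner_conj_symm, hkj, map_zero]
      · exact ContinuousLinearMap.isClosed_ker (innerSL ℂ (e k))
    have h0 : (inner ℂ (e k) (x k) : ℂ) = 0 := hker hk
    have h1 : (inner ℂ (e k) (x k) : ℂ) = 1 := by
      rw [← inner_conj_symm, hbi k k, if_pos rfl, map_one]
    rw [h0] at h1; exact zero_ne_one h1
  -- completeness
  have hcomp : IsCompleteSystem x := by
    rw [IsCompleteSystem, clSpan, Submodule.topologicalClosure_eq_top_iff, Submodule.eq_bot_iff]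
    intro g hg
    have hxg : ∀ n, (inner ℂ (x n) g : ℂ) = 0 := fun n =>
      (Submodule.mem_orthogonal _ g).mp hg (x n) (Submodule.subset_span ⟨n, rfl⟩)
    set P := H₀.orthogonalProjection g with hP
    set h₀ : H := (P : H) with hh₀
    set h₁ : H := g - h₀ with hh₁def
    have hh₁ : h₁ ∈ H₀ᗮ := H₀.sub_starProjection_mem_orthogonal g
    have key : ∀ n, (inner ℂ (e n) h₀ : ℂ) + inner ℂ (v n) h₁ = 0 := by
      intro n
      have h1 : (inner ℂ (e n) h₁ : ℂ) = 0 := Submodule.inner_right_of_mem_orthogonal (hem n) hh₁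
      have h2 : (inner ℂ (v n) h₀ : ℂ) = 0 := Submodule.inner_left_of_mem_orthogonal P.2 (hvm n)
      have h3 := hxg n
      have hg' : g = h₀ + h₁ := by rw [hh₁def]; abel
      rw [hx] at h3
      simp only [] at h3
      rw [hg', inner_add_left, inner_add_right, inner_add_right, h1, h2] at h3
      linear_combination h3
    have hcoe : ∀ n, (inner ℂ (e n) h₀ : ℂ) = (inner ℂ (b n) P : ℂ) := fun n => rfl
    have hsum : Summable fun n => ‖(inner ℂ (b n) P : ℂ)‖ ^ 2 :=
      b.orthonormal.inner_products_summable P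
    have hnt : Tendsto (fun n => ‖(inner ℂ (b n) P : ℂ)‖) atTop (𝓝 0) := by
      have h2 := hsum.tendsto_atTop_zero.sqrt
      simpa [Real.sqrt_sq (norm_nonneg _)] using h2
    have ht0 : Tendsto (fun n => (inner ℂ (e n) h₀ : ℂ)) atTop (𝓝 0) := by
      rw [tendsto_zero_iff_norm_tendsto_zero]
      exact hnt
    have hvt : Tendsto (fun n => (inner ℂ (v n) h₁ : ℂ)) atTop (𝓝 0) := by
      have heq : (fun n => (inner ℂ (v n) h₁ : ℂ)) = fun n => -(inner ℂ (e n) h₀ : ℂ) :=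
        funext fun n => by linear_combination key n
      rw [heq]
      simpa using ht0.neg
    have hui : ∀ i, (inner ℂ ((u i : H)) h₁ : ℂ) = 0 := by
      intro i
      have hp : Tendsto (fun m => Nat.pair i m) atTop atTop :=
        tendsto_atTop_mono (fun m => Nat.right_le_pair i m) tendsto_id
      have h4 := hvt.comp hp
      have heq : ((fun n => (inner ℂ (v n) h₁ : ℂ)) ∘ fun m => Nat.pair i m) =
          fun _ => (inner ℂ ((u i : H)) h₁ : ℂ) := by
        funext m
        simp [hv, Function.comp, Nat.unpair_pair]
      rw [heq] at h4
      exact tendsto_nhds_unique tendsto_const_nhds h4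
    have hh₁0 : h₁ = 0 := by
      have hcont : Continuous fun z : H₀ᗮ => (inner ℂ (z : H) h₁ : ℂ) :=
        (continuous_subtype_val.inner continuous_const)
      have h5 : (fun z : H₀ᗮ => (inner ℂ (z : H) h₁ : ℂ)) = fun _ => 0 :=
        hu.equalizer hcont continuous_const (funext fun i => hui i)
      have h6 := congrFun h5 ⟨h₁, hh₁⟩
      simpa [inner_self_eq_zero] using h6
    have hbP : ∀ n, (inner ℂ (b n) P : ℂ) = 0 := by
      intro n
      have hk := key n
      rw [hcoe n] at hk
      have h7 : (inner ℂ (v n) h₁ : ℂ) = 0 := hui _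
      rw [h7] at hk; linear_combination hk
    have hP0 : P = 0 := by
      have horth : (Submodule.span ℂ (Set.range ⇑b))ᗮ = ⊥ := by
        rw [← Submodule.topologicalClosure_eq_top_iff]; exact b.dense_span
      have hPmem : P ∈ (Submodule.span ℂ (Set.range ⇑b))ᗮ := by
        rw [Submodule.mem_orthogonal']
        intro q hq
        have hle : Submodule.span ℂ (Set.range ⇑b) ≤ (innerSL ℂ P).ker := by
          rw [Submodule.span_le]
          rintro - ⟨n, rfl⟩
          simp only [SetLike.mem_coe, LinearMap.mem_ker, ContinuousLinearMap.coe_coe, innerSL_apply_apply]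
          rw [← inner_conj_symm, hbP n, map_zero]
        exact hle hq
      rw [horth] at hPmem
      exact Submodule.mem_bot ℂ |>.mp hPmem
    have h8 : h₀ = 0 := by rw [hh₀, hP0]; simp
    have h9 : g - h₀ = 0 := hh₁0
    rw [h8, sub_zero] at h9
    exact h9
  -- the closed span of the biorthogonal system is `H₀`
  have hspan : clSpan (Set.range e) = H₀ := by
    apply le_antisymm
    · apply Submodule.topologicalClosure_minimal _ _ hcl
      rw [Submodule.span_le]
      rintro - ⟨n, rfl⟩
      exact hem n
    · intro h hh
      have hd : Dense ((Submodule.span ℂ (Set.range ⇑b) : Submodule ℂ H₀) : Set H₀) := by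
        rw [Submodule.dense_iff_topologicalClosure_eq_top]; exact b.dense_span
      have h1 : (⟨h, hh⟩ : H₀) ∈ closure ((Submodule.span ℂ (Set.range ⇑b)) : Set H₀) := hd _
      have h2 : h ∈ closure (Subtype.val '' ((Submodule.span ℂ (Set.range ⇑b)) : Set H₀)) :=
        image_closure_subset_closure_image continuous_subtype_val ⟨_, h1, rfl⟩
      have h3 : Submodule.map H₀.subtype (Submodule.span ℂ (Set.range ⇑b))
          = Submodule.span ℂ (Set.range e) := by
        rw [Submodule.map_span]
        congr 1
        rw [← Set.range_comp]
        rfl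
      have h4 : Subtype.val '' ((Submodule.span ℂ (Set.range ⇑b)) : Set H₀)
          = ((Submodule.span ℂ (Set.range e)) : Set H) := by
        rw [← h3]; rfl
      rw [h4] at h2
      show h ∈ (Submodule.span ℂ (Set.range e)).topologicalClosure
      rw [← SetLike.mem_coe, Submodule.topologicalClosure_coe]
      exact h2
  exact ⟨x, e, hcomp, hmin, hbi, hspan⟩
end
end

section
/- If the partition ℕ = N1 ⊔ N2 is changed in finitely many elements (moving a finite subset from N1 to N2 or vice versa), then the defect of the mixed system {x_k}_{k∈N1} ∪ {x_k*}_{k∈N2}, i.e., the dimension of the orthogonal complement of its closed linear span, does not change. -/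
open Filter Topology

noncomputable section

variable {H : Type*} [NormedAddCommGroup H] [InnerProductSpace ℂ H] [CompleteSpace H]

lemma orthogonal_clSpan (s : Set H) : (clSpan s)ᗮ = (Submodule.span ℂ s)ᗮ := by
  refine le_antisymm (Submodule.orthogonal_le (Submodule.le_topologicalClosure _)) ?_
  intro z hz
  rw [Submodule.mem_orthogonal]
  intro u hu
  have hu' : u ∈ closure (Submodule.span ℂ s : Set H) := by
    rwa [← Submodule.topologicalClosure_coe]
  have hcl : IsClosed {w : H | (inner ℂ w z : ℂ) = 0} :=
    isClosed_eq (Continuous.inner continuous_id continuous_const) continuous_const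
  have hsub : (Submodule.span ℂ s : Set H) ⊆ {w : H | (inner ℂ w z : ℂ) = 0} := fun w hw => hz w hw
  exact hcl.closure_subset_iff.mpr hsub hu'

lemma mem_orthogonal_span_iff {s : Set H} {z : H} :
    z ∈ (Submodule.span ℂ s)ᗮ ↔ ∀ a ∈ s, (inner ℂ a z : ℂ) = 0 := by
  constructor
  · intro hz a ha
    exact hz a (Submodule.subset_span ha)
  · intro h
    rw [Submodule.mem_orthogonal]
    intro u hu
    induction hu using Submodule.span_induction with
    | mem a ha => exact h a ha
    | zero => simp
    | add a b _ _ ha hb => simp [inner_add_left, ha, hb]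
    | smul c a _ ha => simp [inner_smul_left, ha]

lemma mem_clSpan_orthogonal_iff {s : Set H} {z : H} :
    z ∈ (clSpan s)ᗮ ↔ ∀ a ∈ s, (inner ℂ a z : ℂ) = 0 := by
  rw [orthogonal_clSpan, mem_orthogonal_span_iff]

/-- If `s ⟂ t` and `z` is in the closed span of `s ∪ t` but orthogonal to `t`,
then `z` is in the closed span of `s`. -/
lemma mem_clSpan_of_orth {s t : Set H} (horth : ∀ a ∈ s, ∀ b ∈ t, (inner ℂ a b : ℂ) = 0)
    {z : H} (hz : z ∈ clSpan (s ∪ t)) (hzt : z ∈ (clSpan t)ᗮ) : z ∈ clSpan s := by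
  set f : H →L[ℂ] H := ContinuousLinearMap.id ℂ H - projS t with hf
  have hsM : Submodule.span ℂ s ≤ (clSpan t)ᗮ := by
    rw [Submodule.span_le]
    intro a ha
    rw [SetLike.mem_coe, mem_clSpan_orthogonal_iff]
    intro b hb
    rw [← inner_conj_symm, horth a ha b hb, map_zero]
  have hproj_zero : ∀ w ∈ Submodule.span ℂ s, projS t w = 0 := by
    intro w hw
    have : (clSpan t).orthogonalProjection w = 0 :=
      Submodule.orthogonalProjectionOnto_apply_of_mem_orthogonal (hsM hw)
    simp [projS, this]
  have hproj_self : ∀ w ∈ Submodule.span ℂ t, projS t w = w := by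
    intro w hw
    have hwM : w ∈ clSpan t := Submodule.le_topologicalClosure _ hw
    simp [projS, Submodule.starProjection_eq_self_iff.mpr hwM]
  have hmaps : Set.MapsTo f (Submodule.span ℂ (s ∪ t) : Set H) (clSpan s : Set H) := by
    intro w hw
    rw [SetLike.mem_coe, Submodule.span_union] at hw
    obtain ⟨a, ha, b, hb, rfl⟩ := Submodule.mem_sup.mp hw
    have : f (a + b) = a := by
      simp only [hf, ContinuousLinearMap.sub_apply, ContinuousLinearMap.id_apply, map_add,
        hproj_zero a ha, hproj_self b hb, zero_add]
      abel
    rw [this]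
    exact Submodule.le_topologicalClosure _ ha
  have hz' : z ∈ closure (Submodule.span ℂ (s ∪ t) : Set H) := by
    rwa [← Submodule.topologicalClosure_coe]
  have hfz : f z ∈ closure (clSpan s : Set H) := map_mem_closure f.continuous hz' hmaps
  have hfzz : f z = z := by
    have : (clSpan t).orthogonalProjection z = 0 :=
      Submodule.orthogonalProjectionOnto_apply_of_mem_orthogonal hzt
    simp [hf, projS, this]
  have hcl : IsClosed ((clSpan s : Submodule ℂ H) : Set H) :=
    Submodule.isClosed_topologicalClosure _
  rw [hfzz, hcl.closure_eq] at hfz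
  exact hfz

section NotMem

variable {x y : ℕ → H} (hbi : IsBiorthogonal x y) {N : Set ℕ} {n : ℕ} (hn : n ∉ N)

include hbi hn

lemma xn_not_mem : x n ∉ clSpan (x '' N ∪ y '' (Nᶜ \ {n})) := by
  intro hmem
  have horth : ∀ a ∈ x '' N, ∀ b ∈ y '' (Nᶜ \ {n}), (inner ℂ a b : ℂ) = 0 := by
    rintro a ⟨k, hk, rfl⟩ b ⟨j, hj, rfl⟩
    rw [hbi k j, if_neg]
    rintro rfl
    exact hj.1 hk
  have hzt : x n ∈ (clSpan (y '' (Nᶜ \ {n})))ᗮ := by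
    rw [mem_clSpan_orthogonal_iff]
    rintro a ⟨j, hj, rfl⟩
    rw [← inner_conj_symm, hbi n j, if_neg (by rintro rfl; exact hj.2 rfl), map_zero]
  have hx : x n ∈ clSpan (x '' N) := mem_clSpan_of_orth horth hmem hzt
  have hyn : y n ∈ (clSpan (x '' N))ᗮ := by
    rw [mem_clSpan_orthogonal_iff]
    rintro a ⟨k, hk, rfl⟩
    rw [hbi k n, if_neg (by rintro rfl; exact hn hk)]
  have : (inner ℂ (x n) (y n) : ℂ) = 0 := hyn (x n) hx
  rw [hbi n n, if_pos rfl] at this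
  exact one_ne_zero this

lemma yn_not_mem : y n ∉ clSpan (x '' N ∪ y '' (Nᶜ \ {n})) := by
  intro hmem
  rw [Set.union_comm] at hmem
  have horth : ∀ a ∈ y '' (Nᶜ \ {n}), ∀ b ∈ x '' N, (inner ℂ a b : ℂ) = 0 := by
    rintro a ⟨j, hj, rfl⟩ b ⟨k, hk, rfl⟩
    rw [← inner_conj_symm, hbi k j, if_neg (by rintro rfl; exact hj.1 hk), map_zero]
  have hzt : y n ∈ (clSpan (x '' N))ᗮ := by
    rw [mem_clSpan_orthogonal_iff]
    rintro a ⟨k, hk, rfl⟩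
    rw [hbi k n, if_neg (by rintro rfl; exact hn hk)]
  have hy : y n ∈ clSpan (y '' (Nᶜ \ {n})) := mem_clSpan_of_orth horth hmem hzt
  have hxn : x n ∈ (clSpan (y '' (Nᶜ \ {n})))ᗮ := by
    rw [mem_clSpan_orthogonal_iff]
    rintro a ⟨j, hj, rfl⟩
    rw [← inner_conj_symm, hbi n j, if_neg (by rintro rfl; exact hj.2 rfl), map_zero]
  have : (inner ℂ (y n) (x n) : ℂ) = 0 := hxn (y n) hy
  rw [← inner_conj_symm, hbi n n, if_pos rfl] at this
  simp at this

end NotMem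

/-- Adding a vector not in the closed span decreases the defect by exactly one. -/
lemma rank_insert {S : Set H} {v : H} (hv : v ∉ clSpan S) :
    Module.rank ℂ ↥((clSpan (insert v S))ᗮ) + 1 = Module.rank ℂ ↥((clSpan S)ᗮ) := by
  set W := clSpan S with hW
  set A := clSpan (insert v S) with hA
  set Qv : H := (W.orthogonalProjection v : H) with hQv
  set u : H := v - Qv with hu
  have hu_mem : u ∈ Wᗮ := Submodule.sub_starProjection_mem_orthogonal v
  have hQv_mem : Qv ∈ W := (W.orthogonalProjection v).2
  have hu_ne : u ≠ 0 := by
    intro h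
    apply hv
    have : v = Qv := by rwa [hu, sub_eq_zero] at h
    rw [this]; exact hQv_mem
  have hWA : W ≤ A :=
    Submodule.topologicalClosure_mono (Submodule.span_mono (Set.subset_insert _ _))
  have hvA : v ∈ A :=
    Submodule.le_topologicalClosure _ (Submodule.subset_span (Set.mem_insert _ _))
  have hSW : ∀ a ∈ S, a ∈ W := fun a ha =>
    Submodule.le_topologicalClosure _ (Submodule.subset_span ha)
  clear_value u Qv
  have hvu : (inner ℂ v u : ℂ) = inner ℂ u u := by
    have h0 : (inner ℂ Qv u : ℂ) = 0 := Submodule.inner_right_of_mem_orthogonal hQv_mem hu_mem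
    have hv' : v = u + Qv := by rw [hu]; abel
    rw [hv', inner_add_left, h0, add_zero]
  have huu_ne : (inner ℂ u u : ℂ) ≠ 0 := fun h => hu_ne (inner_self_eq_zero.mp h)
  have h1 : Aᗮ ⊔ (ℂ ∙ u) = Wᗮ := by
    apply le_antisymm
    · rw [sup_le_iff]
      exact ⟨Submodule.orthogonal_le hWA,
        (Submodule.span_singleton_le_iff_mem _ _).mpr hu_mem⟩
    · intro z hz
      set c : ℂ := inner ℂ u z / inner ℂ u u with hc
      have hz1 : z - c • u ∈ Aᗮ := by
        rw [hA, mem_clSpan_orthogonal_iff]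
        intro a ha
        rcases ha with rfl | haS
        · rw [inner_sub_right, inner_smul_right]
          have hvz : (inner ℂ a z : ℂ) = inner ℂ u z := by
            have h0 : (inner ℂ Qv z : ℂ) = 0 := Submodule.inner_right_of_mem_orthogonal hQv_mem hz
            have hv' : a = u + Qv := by rw [hu]; abel
            rw [hv', inner_add_left, h0, add_zero]
          rw [hvz, hvu, hc, div_mul_cancel₀ _ huu_ne, sub_self]
        · have haW : a ∈ W := hSW a haS
          have : z - c • u ∈ Wᗮ := Submodule.sub_mem _ hz (Submodule.smul_mem _ _ hu_mem)
          exact Submodule.inner_right_of_mem_orthogonal haW this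
      have : z = (z - c • u) + c • u := by abel
      rw [this]
      exact Submodule.add_mem _ (Submodule.mem_sup_left hz1)
        (Submodule.mem_sup_right (Submodule.smul_mem _ _ (Submodule.mem_span_singleton_self u)))
  have h2 : Aᗮ ⊓ (ℂ ∙ u) = ⊥ := by
    rw [eq_bot_iff]
    rintro w ⟨hw1, hw2⟩
    obtain ⟨c, rfl⟩ := Submodule.mem_span_singleton.mp hw2
    have : (inner ℂ v (c • u) : ℂ) = 0 := Submodule.inner_right_of_mem_orthogonal hvA hw1
    rw [inner_smul_right, hvu] at this
    rcases mul_eq_zero.mp this with h | h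
    · rw [Submodule.mem_bot, h, zero_smul]
    · exact absurd h huu_ne
  have hrank := Submodule.rank_sup_add_rank_inf_eq Aᗮ (ℂ ∙ u)
  rw [h1, h2] at hrank
  have hbot : Module.rank ℂ ↥(⊥ : Submodule ℂ H) = 0 := rank_bot ℂ H
  have hone : Module.rank ℂ ↥(ℂ ∙ u) = 1 :=
    Module.rank_eq_one_iff_finrank_eq_one.mpr (finrank_span_singleton hu_ne)
  rw [hbot, hone, add_zero] at hrank
  exact hrank.symm

/-- The one-element move. -/
lemma defect_step (x y : ℕ → H) (hbi : IsBiorthogonal x y) (N : Set ℕ) (n : ℕ) (hn : n ∉ N) :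
    Module.rank ℂ ↥((clSpan (x '' insert n N ∪ y '' (insert n N)ᶜ))ᗮ) =
      Module.rank ℂ ↥((clSpan (x '' N ∪ y '' Nᶜ))ᗮ) := by
  have hcompl : (insert n N)ᶜ = Nᶜ \ {n} := by
    ext k; simp [Set.mem_compl_iff, and_comm]
  set S : Set H := x '' N ∪ y '' (Nᶜ \ {n}) with hS
  have hL : x '' insert n N ∪ y '' (insert n N)ᶜ = insert (x n) S := by
    rw [hcompl, Set.image_insert_eq, Set.insert_union]
  have hR : x '' N ∪ y '' Nᶜ = insert (y n) S := by
    have : Nᶜ = insert n (Nᶜ \ {n}) := by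
      rw [Set.insert_diff_singleton, Set.insert_eq_self.mpr (Set.mem_compl hn)]
    rw [this, Set.image_insert_eq, Set.union_insert]
  rw [hL, hR]
  have h1 := rank_insert (xn_not_mem hbi hn)
  have h2 := rank_insert (yn_not_mem hbi hn)
  rw [← h2] at h1
  exact Cardinal.eq_of_add_eq_add_right h1 Cardinal.one_lt_aleph0


/-- Changing a partition `ℕ = N₁ ⊔ N₂` in finitely many elements does not change the defect
of the mixed system, i.e. the dimension of the orthogonal complement of its closed span. -/
theorem defect_invariant_finite_change
    (x y : ℕ → H) (hbi : IsBiorthogonal x y)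
    (N₁ N₁' : Set ℕ) (hfin : (symmDiff N₁ N₁').Finite) :
    Module.rank ℂ ↥((clSpan (x '' N₁ ∪ y '' N₁ᶜ))ᗮ) =
      Module.rank ℂ ↥((clSpan (x '' N₁' ∪ y '' N₁'ᶜ))ᗮ) := by
  set d : Set ℕ → Cardinal := fun N => Module.rank ℂ ↥((clSpan (x '' N ∪ y '' Nᶜ))ᗮ) with hd
  have hstep : ∀ (N : Set ℕ) (n : ℕ), n ∉ N → d (insert n N) = d N := fun N n hn =>
    defect_step x y hbi N n hn
  have hunion : ∀ (F : Set ℕ), F.Finite → ∀ N : Set ℕ, d (N ∪ F) = d N := by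
    intro F hF
    refine Set.Finite.induction_on (motive := fun F _ => ∀ N : Set ℕ, d (N ∪ F) = d N) _ hF
      (fun N => by rw [Set.union_empty]) ?_
    intro a F ha hF ih N
    rw [Set.union_insert]
    by_cases haNF : a ∈ N ∪ F
    · rw [Set.insert_eq_self.mpr haNF, ih N]
    · rw [hstep _ _ haNF, ih N]
  have hdiff : ∀ (F : Set ℕ), F.Finite → ∀ N : Set ℕ, d (N \ F) = d N := by
    intro F hF
    refine Set.Finite.induction_on (motive := fun F _ => ∀ N : Set ℕ, d (N \ F) = d N) _ hF
      (fun N => by rw [Set.diff_empty]) ?_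
    intro a F ha hF ih N
    have hsplit : N \ insert a F = (N \ F) \ {a} := by
      ext k; simp only [Set.mem_diff, Set.mem_insert_iff, Set.mem_singleton_iff]; tauto
    rw [hsplit]
    by_cases haNF : a ∈ N \ F
    · have h1 : d (N \ F) = d ((N \ F) \ {a}) := by
        have heq : N \ F = insert a ((N \ F) \ {a}) := by
          rw [Set.insert_diff_singleton, Set.insert_eq_self.mpr haNF]
        nth_rewrite 1 [heq]
        exact hstep _ _ (fun h => h.2 rfl)
      rw [← h1, ih N]
    · rw [Set.diff_singleton_eq_self haNF, ih N]
  have hfin1 : (N₁ \ N₁').Finite := hfin.subset (fun k hk => by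
    rw [Set.mem_symmDiff]; exact Or.inl ⟨hk.1, hk.2⟩)
  have hfin2 : (N₁' \ N₁).Finite := hfin.subset (fun k hk => by
    rw [Set.mem_symmDiff]; exact Or.inr ⟨hk.1, hk.2⟩)
  have e1 : d (N₁ ∩ N₁') = d N₁ := by
    have h := hdiff (N₁ \ N₁') hfin1 N₁
    rwa [show N₁ \ (N₁ \ N₁') = N₁ ∩ N₁' by ext k; simp only [Set.mem_diff, Set.mem_inter_iff]; tauto] at h
  have e2 : d (N₁ ∩ N₁') = d N₁' := by
    have h := hunion (N₁' \ N₁) hfin2 (N₁ ∩ N₁')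
    rw [show (N₁ ∩ N₁') ∪ (N₁' \ N₁) = N₁' by
      ext k; simp only [Set.mem_union, Set.mem_inter_iff, Set.mem_diff]; tauto] at h
    exact h.symm
  exact e1.symm.trans e2
end
end

section
/- A complete minimal system {x_k} in H is hereditarily complete if and only if for every σ ⊆ ℕ, the intersection over m of the closed spans H_{σ_m} (where σ_m = σ ∪ [m+1,∞)) equals H_σ; equivalently, if and only if the orthogonal projections onto H_{σ_m} converge pointwise to the projection onto H_σ for every σ. -/
open Filter Topology

noncomputable section

variable {H : Type*} [NormedAddCommGroup H] [InnerProductSpace ℂ H] [CompleteSpace H]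

/-! ### Auxiliary lemmas -/

lemma clSpan_mono {s t : Set H} (h : s ⊆ t) : clSpan s ≤ clSpan t :=
  Submodule.topologicalClosure_mono (Submodule.span_mono h)

lemma subset_clSpan (s : Set H) : s ⊆ (clSpan s : Set H) :=
  Submodule.subset_span.trans (Submodule.le_topologicalClosure _)

lemma isClosed_clSpan (s : Set H) : IsClosed ((clSpan s : Submodule ℂ H) : Set H) :=
  Submodule.isClosed_topologicalClosure _

lemma clSpan_le {s : Set H} {N : Submodule ℂ H} (hN : IsClosed (N : Set H))
    (h : s ⊆ (N : Set H)) : clSpan s ≤ N :=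
  Submodule.topologicalClosure_minimal _ (Submodule.span_le.2 h) hN

lemma inner_eq_zero_of_mem_span {w : H} {s : Set H}
    (h : ∀ v ∈ s, (inner ℂ w v : ℂ) = 0) {f : H} (hf : f ∈ Submodule.span ℂ s) :
    (inner ℂ w f : ℂ) = 0 := by
  have hle : Submodule.span ℂ s ≤ LinearMap.ker (innerSL ℂ w) :=
    Submodule.span_le.2 fun v hv => by show innerSL ℂ w v = 0; simpa using h v hv
  simpa using hle hf

lemma inner_eq_zero_of_mem_clSpan {w : H} {s : Set H}
    (h : ∀ v ∈ s, (inner ℂ w v : ℂ) = 0) {f : H} (hf : f ∈ clSpan s) :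
    (inner ℂ w f : ℂ) = 0 := by
  have hle : clSpan s ≤ LinearMap.ker (innerSL ℂ w) :=
    clSpan_le (ContinuousLinearMap.isClosed_ker _)
      fun v hv => by show innerSL ℂ w v = 0; simpa using h v hv
  simpa using hle hf

lemma IsBiorthogonal.symm_inner {x y : ℕ → H} (hbi : IsBiorthogonal x y) (j k : ℕ) :
    (inner ℂ (y j) (x k) : ℂ) = if k = j then 1 else 0 := by
  rw [← inner_conj_symm, hbi k j]
  split_ifs <;> simp

/-- In a finite span of the `x k`, if all biorthogonal functionals vanish then the vector is 0. -/
lemma eq_zero_of_mem_span_finset {x y : ℕ → H} (hbi : IsBiorthogonal x y)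
    (t : Finset ℕ) : ∀ f : H, f ∈ Submodule.span ℂ (x '' (t : Set ℕ)) →
      (∀ j ∈ t, (inner ℂ (y j) f : ℂ) = 0) → f = 0 := by
  induction t using Finset.induction_on with
  | empty => intro f hf _; simpa using hf
  | @insert a t ha ih =>
    intro f hf hy
    rw [Finset.coe_insert, Set.image_insert_eq, Submodule.span_insert] at hf
    obtain ⟨u, hu, g, hg, rfl⟩ := Submodule.mem_sup.1 hf
    obtain ⟨c, rfl⟩ := Submodule.mem_span_singleton.1 hu
    have hga : (inner ℂ (y a) g : ℂ) = 0 := by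
      refine inner_eq_zero_of_mem_span ?_ hg
      rintro _ ⟨j, hj, rfl⟩
      rw [hbi.symm_inner]
      have : j ≠ a := by rintro rfl; exact ha hj
      simp [this]
    have hc : c = 0 := by
      have h1 := hy a (Finset.mem_insert_self _ _)
      rw [inner_add_right, hga, add_zero, inner_smul_right, hbi.symm_inner] at h1
      simpa using h1
    rw [hc, zero_smul, zero_add]
    refine ih g hg fun j hj => ?_
    have h2 := hy j (Finset.mem_insert_of_mem hj)
    rwa [inner_add_right, inner_smul_right, hbi.symm_inner, if_neg, mul_zero, zero_add] at h2
    rintro rfl; exact ha hj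

/-- The sum of a closed subspace and a finite-dimensional subspace is closed. -/
lemma isClosed_sup_of_finiteDimensional (S F : Submodule ℂ H) (hS : IsClosed (S : Set H))
    [FiniteDimensional ℂ F] : IsClosed ((S ⊔ F : Submodule ℂ H) : Set H) := by
  haveI : CompleteSpace S := hS.completeSpace_coe
  set Q : H →L[ℂ] H :=
    ContinuousLinearMap.id ℂ H - S.subtypeL ∘L Submodule.orthogonalProjectionOnto S with hQdef
  have hQ : ∀ h : H, Q h = h - (Submodule.orthogonalProjectionOnto S h : H) := fun h => rfl
  set G : Submodule ℂ H := F.map (Q : H →ₗ[ℂ] H) with hGdef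
  haveI : FiniteDimensional ℂ G := Module.Finite.map F (Q : H →ₗ[ℂ] H)
  haveI : CompleteSpace G := FiniteDimensional.complete ℂ G
  have hGS : G ≤ Sᗮ := by
    rintro _ ⟨f, hf, rfl⟩
    exact Submodule.sub_starProjection_mem_orthogonal (K := S) f
  have hSG : S ≤ Gᗮ := by
    intro s hs
    refine (Submodule.mem_orthogonal G s).2 fun u hu => ?_
    exact inner_eq_zero_symm.1 ((hGS hu) s hs)
  have hsup : S ⊔ F = S ⊔ G := by
    refine le_antisymm (sup_le le_sup_left fun f hf => ?_) (sup_le le_sup_left ?_)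
    · have : f = (Submodule.orthogonalProjectionOnto S f : H) + Q f := by rw [hQ]; abel
      rw [this]
      exact Submodule.add_mem _ (Submodule.mem_sup_left (Submodule.orthogonalProjectionOnto S f).2)
        (Submodule.mem_sup_right ⟨f, hf, rfl⟩)
    · rintro _ ⟨f, hf, rfl⟩
      show Q f ∈ S ⊔ F
      rw [hQ]
      exact Submodule.sub_mem _ (Submodule.mem_sup_right hf)
        (Submodule.mem_sup_left (Submodule.orthogonalProjectionOnto S f).2)
  rw [hsup]
  have hpre : ((S ⊔ G : Submodule ℂ H) : Set H) =
      (ContinuousLinearMap.id ℂ H - G.subtypeL ∘L Submodule.orthogonalProjectionOnto G) ⁻¹' (S : Set H) := by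
    ext h
    simp only [Set.mem_preimage, SetLike.mem_coe, ContinuousLinearMap.sub_apply,
      ContinuousLinearMap.id_apply, ContinuousLinearMap.comp_apply, Submodule.subtypeL_apply]
    constructor
    · intro hm
      obtain ⟨s, hs, g, hg, rfl⟩ := Submodule.mem_sup.1 hm
      have h1 : Submodule.orthogonalProjectionOnto G (s + g) = ⟨g, hg⟩ := by
        rw [map_add, Submodule.orthogonalProjectionOnto_apply_of_mem_orthogonal (hSG hs),
          zero_add]
        exact Submodule.orthogonalProjectionOnto_mem_subspace_eq_self ⟨g, hg⟩
      rw [h1]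
      simpa using hs
    · intro hs
      have : h = (h - (Submodule.orthogonalProjectionOnto G h : H)) + (Submodule.orthogonalProjectionOnto G h : H) := by abel
      rw [this]
      exact Submodule.add_mem _ (Submodule.mem_sup_left hs)
        (Submodule.mem_sup_right (Submodule.orthogonalProjectionOnto G h).2)
  rw [hpre]
  exact hS.preimage (ContinuousLinearMap.continuous _)

/-- Orthogonal projections onto a decreasing sequence of closed subspaces converge pointwise to
the projection onto the intersection. -/
lemma tendsto_orthogonalProjection_iInf (K : ℕ → Submodule ℂ H)
    [∀ n, CompleteSpace (K n)] (hcl : ∀ n, IsClosed ((K n : Submodule ℂ H) : Set H))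
    (hA : Antitone K) (L : Submodule ℂ H) [CompleteSpace L] (hL : L = ⨅ n, K n) (v : H) :
    Tendsto (fun n => (Submodule.orthogonalProjectionOnto (K n) v : H)) atTop
      (𝓝 (Submodule.orthogonalProjectionOnto L v : H)) := by
  set u : ℕ → H := fun n => (Submodule.orthogonalProjectionOnto (K n) v : H) with hu
  have humem : ∀ {m n}, m ≤ n → u n ∈ K m := fun {m n} hmn => hA hmn (Submodule.orthogonalProjectionOnto _ v).2
  have key : ∀ m n, m ≤ n → (inner ℂ (u m) (u n) : ℂ) = (‖u n‖ : ℂ) ^ 2 := by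
    intro m n hmn
    have h1 : (inner ℂ (u m) (u n) : ℂ) = inner ℂ v ((Submodule.orthogonalProjectionOnto (K m) (u n) : H)) :=
      Submodule.inner_starProjection_left_eq_right (K := K m) v (u n)
    have h2 : ((Submodule.orthogonalProjectionOnto (K m) (u n) : H)) = u n :=
      Submodule.starProjection_eq_self_iff.2 (humem hmn)
    have h3 : (inner ℂ (v - u n) (u n) : ℂ) = 0 :=
      Submodule.starProjection_inner_eq_zero (K := K n) v (u n) (Submodule.orthogonalProjectionOnto _ v).2
    rw [inner_sub_left, sub_eq_zero] at h3
    rw [h1, h2, h3, inner_self_eq_norm_sq_to_K]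
    norm_cast
  set a : ℕ → ℝ := fun n => ‖u n‖ ^ 2 with ha
  have hdiff : ∀ m n, m ≤ n → ‖u m - u n‖ ^ 2 = a m - a n := by
    intro m n hmn
    have := @norm_sub_sq ℂ _ _ _ _ (u m) (u n)
    rw [key m n hmn] at this
    simp only [ha] at this ⊢
    rw [this]
    have : (RCLike.re ((‖u n‖ : ℂ) ^ 2) : ℝ) = ‖u n‖ ^ 2 := by
      norm_cast
    rw [this]; ring
  have haA : Antitone a := by
    intro m n hmn
    have h := hdiff m n hmn
    nlinarith [sq_nonneg ‖u m - u n‖, norm_nonneg (u m - u n)]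
  have hbdd : BddBelow (Set.range a) := ⟨0, by rintro _ ⟨n, rfl⟩; positivity⟩
  have haC : CauchySeq a := (tendsto_atTop_ciInf haA hbdd).cauchySeq
  have huC : CauchySeq u := by
    rw [Metric.cauchySeq_iff'] at haC ⊢
    intro ε hε
    obtain ⟨N, hN⟩ := haC (ε ^ 2) (by positivity)
    refine ⟨N, fun n hn => ?_⟩
    have h1 : ‖u N - u n‖ ^ 2 = a N - a n := hdiff N n hn
    have h2 := hN n hn
    rw [Real.dist_eq] at h2
    rw [dist_eq_norm, ← norm_neg, neg_sub]
    nlinarith [norm_nonneg (u N - u n), le_abs_self (a n - a N), neg_abs_le (a n - a N)]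
  obtain ⟨w, hw⟩ := cauchySeq_tendsto_of_complete huC
  have hwL : w ∈ L := by
    rw [hL, Submodule.mem_iInf]
    intro m
    exact (hcl m).mem_of_tendsto hw (eventually_atTop.2 ⟨m, fun n hn => humem hn⟩)
  have horth : ∀ p ∈ L, (inner ℂ (v - w) p : ℂ) = 0 := by
    intro p hp
    have hmem : ∀ n, p ∈ K n := fun n => (Submodule.mem_iInf K).1 (hL ▸ hp) n
    have h1 : ∀ n, (inner ℂ (v - u n) p : ℂ) = 0 := fun n =>
      Submodule.starProjection_inner_eq_zero (K := K n) v p (hmem n)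
    have h2 : Tendsto (fun n => (inner ℂ (v - u n) p : ℂ)) atTop (𝓝 (inner ℂ (v - w) p : ℂ)) :=
      (tendsto_const_nhds.sub hw).inner tendsto_const_nhds
    have h3 : Tendsto (fun n => (inner ℂ (v - u n) p : ℂ)) atTop (𝓝 0) := by
      simpa [h1] using tendsto_const_nhds (α := ℂ) (x := (0 : ℂ)) (f := atTop (α := ℕ))
    exact tendsto_nhds_unique h2 h3
  have hproj : ((Submodule.orthogonalProjectionOnto L v : L) : H) = w :=
    Submodule.eq_starProjection_of_mem_of_inner_eq_zero hwL horth
  rw [hproj]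
  exact hw

/-- A complete minimal system `x` with biorthogonal `y` is hereditarily complete iff for every
`σ ⊆ ℕ` the intersection of the closed spans `H_{σₘ}` (with `σₘ = σ ∪ [m,∞)`) equals
`H_σ`; equivalently, iff the orthogonal projections onto `H_{σₘ}` converge pointwise to the
projection onto `H_σ`, for every `σ`. -/
theorem hereditarily_complete_iff_iInf_spans [TopologicalSpace.SeparableSpace H]
    (x y : ℕ → H) (hc : IsCompleteSystem x) (hmin : IsMinimalSystem x)
    (hbi : IsBiorthogonal x y) :
    ((∀ z : H, z ∈ clSpan (Set.range fun k => (inner ℂ (y k) z : ℂ) • x k)) ↔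
        ∀ σ : Set ℕ, (⨅ m : ℕ, clSpan (x '' (σ ∪ {k | m ≤ k}))) = clSpan (x '' σ)) ∧
    ((∀ z : H, z ∈ clSpan (Set.range fun k => (inner ℂ (y k) z : ℂ) • x k)) ↔
        ∀ σ : Set ℕ, ∀ v : H,
          Tendsto (fun m => projS (x '' (σ ∪ {k | m ≤ k})) v) atTop
            (𝓝 (projS (x '' σ) v))) := by
  -- the easy inclusion, valid always
  have hle : ∀ σ : Set ℕ, clSpan (x '' σ) ≤ ⨅ m : ℕ, clSpan (x '' (σ ∪ {k | m ≤ k})) :=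
    fun σ => le_iInf fun m => clSpan_mono (Set.image_mono Set.subset_union_left)
  -- Forward: hereditary completeness implies the iInf description
  have fwd : (∀ z : H, z ∈ clSpan (Set.range fun k => (inner ℂ (y k) z : ℂ) • x k)) →
      ∀ σ : Set ℕ, (⨅ m : ℕ, clSpan (x '' (σ ∪ {k | m ≤ k}))) = clSpan (x '' σ) := by
    intro hhc σ
    refine le_antisymm ?_ (hle σ)
    intro z hz
    rw [Submodule.mem_iInf] at hz
    -- coefficients outside σ vanish
    have hcoeff : ∀ k, k ∉ σ → (inner ℂ (y k) z : ℂ) = 0 := by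
      intro k hk
      refine inner_eq_zero_of_mem_clSpan ?_ (hz (k + 1))
      rintro _ ⟨j, hj, rfl⟩
      have hjk : j ≠ k := by
        rcases hj with hj | hj
        · rintro rfl; exact hk hj
        · rintro rfl; exact absurd hj (by simp)
      rw [hbi.symm_inner, if_neg hjk]
    refine clSpan_le (isClosed_clSpan _) ?_ (hhc z)
    rintro _ ⟨k, rfl⟩
    show (inner ℂ (y k) z : ℂ) • x k ∈ (clSpan (x '' σ) : Set H)
    by_cases hk : k ∈ σ
    · exact Submodule.smul_mem _ _ (subset_clSpan _ ⟨k, hk, rfl⟩)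
    · rw [hcoeff k hk, zero_smul]
      exact Submodule.zero_mem _
  -- Backward: the iInf description implies hereditary completeness
  have bwd : (∀ σ : Set ℕ, (⨅ m : ℕ, clSpan (x '' (σ ∪ {k | m ≤ k}))) = clSpan (x '' σ)) →
      ∀ z : H, z ∈ clSpan (Set.range fun k => (inner ℂ (y k) z : ℂ) • x k) := by
    intro hinf z
    set σ : Set ℕ := {k | (inner ℂ (y k) z : ℂ) ≠ 0} with hσ
    -- z belongs to every clSpan (x '' (σ ∪ [m, ∞)))
    have hzm : ∀ m : ℕ, z ∈ clSpan (x '' (σ ∪ {k | m ≤ k})) := by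
      intro m
      set S : Submodule ℂ H := clSpan (x '' (σ ∪ {k | m ≤ k})) with hS
      have hTfin : ({k : ℕ | k < m ∧ k ∉ σ}).Finite :=
        (Set.finite_Iio m).subset fun k hk => hk.1
      set t : Finset ℕ := hTfin.toFinset with ht
      set F : Submodule ℂ H := Submodule.span ℂ (x '' (t : Set ℕ)) with hF
      haveI : FiniteDimensional ℂ F :=
        FiniteDimensional.span_of_finite ℂ ((hTfin.image x).subset
          (by rw [ht, Set.Finite.coe_toFinset]))
      have hclosed : IsClosed ((S ⊔ F : Submodule ℂ H) : Set H) :=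
        isClosed_sup_of_finiteDimensional S F (isClosed_clSpan _)
      have htop : z ∈ S ⊔ F := by
        have : clSpan (Set.range x) ≤ S ⊔ F := by
          refine clSpan_le hclosed ?_
          rintro _ ⟨k, rfl⟩
          by_cases hk : k ∈ σ ∪ {j | m ≤ j}
          · exact Submodule.mem_sup_left (subset_clSpan _ ⟨k, hk, rfl⟩)
          · have hk' : k < m ∧ k ∉ σ := by
              simp only [Set.mem_union, Set.mem_setOf_eq] at hk
              push_neg at hk
              exact ⟨hk.2, hk.1⟩
            refine Submodule.mem_sup_right (Submodule.subset_span ⟨k, ?_, rfl⟩)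
            rw [ht, Set.Finite.coe_toFinset]; exact hk'
        exact this (by rw [hc]; trivial)
      obtain ⟨s, hs, f, hf, hsf⟩ := Submodule.mem_sup.1 htop
      have hf0 : f = 0 := by
        refine eq_zero_of_mem_span_finset hbi t f hf fun j hj => ?_
        have hj' : j < m ∧ j ∉ σ := by
          have := hj
          rw [ht, Set.Finite.mem_toFinset] at this
          exact this
        have hyz : (inner ℂ (y j) z : ℂ) = 0 := by
          by_contra hne
          exact hj'.2 hne
        have hys : (inner ℂ (y j) s : ℂ) = 0 := by
          refine inner_eq_zero_of_mem_clSpan ?_ hs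
          rintro _ ⟨i, hi, rfl⟩
          have hij : i ≠ j := by
            rcases hi with hi | hi
            · rintro rfl; exact hj'.2 hi
            · rintro rfl; exact absurd hi (not_le.2 hj'.1)
          rw [hbi.symm_inner, if_neg hij]
        have : f = z - s := by rw [← hsf]; abel
        rw [this, inner_sub_right, hyz, hys, sub_zero]
      rw [← hsf, hf0, add_zero]
      exact hs
    have hzσ : z ∈ clSpan (x '' σ) := by
      rw [← hinf σ, Submodule.mem_iInf]
      exact hzm
    refine clSpan_le (isClosed_clSpan _) ?_ hzσ
    rintro _ ⟨k, hk, rfl⟩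
    have hck : (inner ℂ (y k) z : ℂ) ≠ 0 := hk
    have hmem : (inner ℂ (y k) z : ℂ) • x k ∈
        clSpan (Set.range fun k => (inner ℂ (y k) z : ℂ) • x k) :=
      subset_clSpan _ ⟨k, rfl⟩
    have := Submodule.smul_mem _ ((inner ℂ (y k) z : ℂ)⁻¹) hmem
    rwa [smul_smul, inv_mul_cancel₀ hck, one_smul] at this
  constructor
  · exact ⟨fwd, bwd⟩
  constructor
  · -- hereditary completeness implies projection convergence
    intro hhc σ v
    have hinf := fwd hhc σ
    have hA : Antitone fun m : ℕ => clSpan (x '' (σ ∪ {k | m ≤ k})) := by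
      intro m n hmn
      exact clSpan_mono (Set.image_mono (Set.union_subset_union_right σ
        fun k hk => le_trans hmn hk))
    simp only [projS, ContinuousLinearMap.comp_apply, Submodule.subtypeL_apply]
    exact tendsto_orthogonalProjection_iInf _ (fun n => isClosed_clSpan _) hA _ hinf.symm v
  · -- projection convergence implies hereditary completeness
    intro hconv
    refine bwd fun σ => le_antisymm ?_ (hle σ)
    intro z hz
    rw [Submodule.mem_iInf] at hz
    have hfix : ∀ m : ℕ, projS (x '' (σ ∪ {k | m ≤ k})) z = z := by
      intro m
      simp only [projS, ContinuousLinearMap.comp_apply, Submodule.subtypeL_apply]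
      exact Submodule.starProjection_eq_self_iff.2 (hz m)
    have h1 := hconv σ z
    rw [funext hfix] at h1
    have h2 : projS (x '' σ) z = z := tendsto_nhds_unique h1 tendsto_const_nhds
    rw [← h2]
    simp only [projS, ContinuousLinearMap.comp_apply, Submodule.subtypeL_apply]
    exact (Submodule.orthogonalProjectionOnto _ z).2
end
end

section
/- Let {x_k} be a normalized complete minimal system in H, and endow 𝔓(ℕ) with the metric ρ(σ,τ) = Σ_k |1_σ(k) − 1_τ(k)|/2^k, and the set of projections {P_σ} with the metric d_w(P,Q) = Σ_{k,j} |((P − Q)x_k, x_j)|/2^{k+j}. Then the inverse map P_σ ↦ σ is uniformly continuous from ({P_σ}, d_w) to (𝔓(ℕ), ρ). -/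
open Filter Topology

noncomputable section

variable {H : Type*} [NormedAddCommGroup H] [InnerProductSpace ℂ H] [CompleteSpace H]

/-- The metric `ρ` on subsets of `ℕ`. -/
def rhoMetric (σ τ : Set ℕ) : ℝ :=
  ∑' k : ℕ, |σ.indicator (fun _ => (1 : ℝ)) k - τ.indicator (fun _ => (1 : ℝ)) k| / 2 ^ k

/-- The weak-operator metric `d_w` determined by the system `x`. -/
def dW (x : ℕ → H) (P Q : H →L[ℂ] H) : ℝ :=
  ∑' p : ℕ × ℕ, ‖(inner ℂ ((P - Q) (x p.1)) (x p.2) : ℂ)‖ / 2 ^ (p.1 + p.2)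

open Metric in
lemma projS_apply' (s : Set H) (v : H) :
    projS s v = ((clSpan s).orthogonalProjection v : H) := rfl

lemma projS_apply_mem (s : Set H) (v : H) : projS s v ∈ clSpan s := by
  rw [projS_apply']; exact SetLike.coe_mem _

lemma projS_eq_self {s : Set H} {v : H} (hv : v ∈ clSpan s) : projS s v = v := by
  exact Submodule.starProjection_eq_self_iff.mpr hv

lemma norm_projS_apply_le (s : Set H) (v : H) : ‖projS s v‖ ≤ ‖v‖ := by
  rw [projS_apply']
  calc ‖((clSpan s).orthogonalProjection v : H)‖
      = ‖(clSpan s).orthogonalProjection v‖ := rfl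
    _ ≤ ‖(clSpan s).orthogonalProjection‖ * ‖v‖ := ((clSpan s).orthogonalProjection).le_opNorm v
    _ ≤ 1 * ‖v‖ := by
        have := Submodule.orthogonalProjectionOnto_norm_le (clSpan s)
        have h0 : (0:ℝ) ≤ ‖v‖ := norm_nonneg v
        nlinarith
    _ = ‖v‖ := one_mul _

lemma mem_clSpan_of_mem {x : ℕ → H} {σ : Set ℕ} {k : ℕ} (hk : k ∈ σ) :
    x k ∈ clSpan (x '' σ) :=
  Submodule.le_topologicalClosure _ (Submodule.subset_span ⟨k, hk, rfl⟩)

open Metric in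
lemma key_lower (x : ℕ → H) {σ τ : Set ℕ} {k : ℕ} (hk : k ∈ σ) (hk' : k ∉ τ) :
    infDist (x k) (clSpan (x '' {j | j ≠ k}) : Set H) ^ 2
      ≤ ‖(inner ℂ ((projS (x '' σ) - projS (x '' τ)) (x k)) (x k) : ℂ)‖ := by
  set Q := projS (x '' τ) with hQ
  set w := x k - Q (x k) with hw
  have hP : projS (x '' σ) (x k) = x k := projS_eq_self (mem_clSpan_of_mem hk)
  have h1 : (projS (x '' σ) - Q) (x k) = w := by
    simp [hw, ContinuousLinearMap.sub_apply, hP]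
  have horth : w ∈ (clSpan (x '' τ))ᗮ := by
    exact
      Submodule.sub_starProjection_mem_orthogonal (K := clSpan (x '' τ)) (x k)
  have hz : (inner ℂ w (Q (x k)) : ℂ) = 0 :=
    (Submodule.mem_orthogonal' _ _).mp horth _ (projS_apply_mem _ _)
  have hinner : (inner ℂ w (x k) : ℂ) = (‖w‖ : ℂ) ^ 2 := by
    have hx : x k = w + Q (x k) := by simp [hw]
    calc (inner ℂ w (x k) : ℂ) = inner ℂ w (w + Q (x k)) := by rw [← hx]
      _ = inner ℂ w w + inner ℂ w (Q (x k)) := inner_add_right _ _ _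
      _ = (‖w‖ : ℂ) ^ 2 := by rw [hz, inner_self_eq_norm_sq_to_K, add_zero]; norm_cast
  have hdist : infDist (x k) (clSpan (x '' {j | j ≠ k}) : Set H) ≤ ‖w‖ := by
    have hsub : clSpan (x '' τ) ≤ clSpan (x '' {j | j ≠ k}) :=
      Submodule.topologicalClosure_mono (Submodule.span_mono
        (Set.image_mono (fun j hj => fun hjk => hk' (hjk ▸ hj))))
    have hmem : Q (x k) ∈ (clSpan (x '' {j | j ≠ k}) : Set H) :=
      hsub (projS_apply_mem _ _)
    calc infDist (x k) (clSpan (x '' {j | j ≠ k}) : Set H)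
        ≤ dist (x k) (Q (x k)) := infDist_le_dist_of_mem hmem
      _ = ‖w‖ := by rw [dist_eq_norm, hw]
  have h0 : (0:ℝ) ≤ infDist (x k) (clSpan (x '' {j | j ≠ k}) : Set H) := infDist_nonneg
  calc infDist (x k) (clSpan (x '' {j | j ≠ k}) : Set H) ^ 2
      ≤ ‖w‖ ^ 2 := by nlinarith
    _ = ‖(inner ℂ w (x k) : ℂ)‖ := by
        rw [hinner]; simp [norm_pow]
    _ = ‖(inner ℂ ((projS (x '' σ) - Q) (x k)) (x k) : ℂ)‖ := by rw [h1]

open Metric in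
lemma infDist_min_pos (x : ℕ → H) (hmin : IsMinimalSystem x) (k : ℕ) :
    0 < infDist (x k) (clSpan (x '' {j | j ≠ k}) : Set H) := by
  have hcl : IsClosed (clSpan (x '' {j | j ≠ k}) : Set H) :=
    Submodule.isClosed_topologicalClosure _
  exact (hcl.notMem_iff_infDist_pos ⟨0, Submodule.zero_mem _⟩).mp (hmin k)

lemma dW_summable (x : ℕ → H) (hnorm : ∀ k, ‖x k‖ = 1) (σ τ : Set ℕ) :
    Summable (fun p : ℕ × ℕ =>
      ‖(inner ℂ ((projS (x '' σ) - projS (x '' τ)) (x p.1)) (x p.2) : ℂ)‖ / 2 ^ (p.1 + p.2)) := by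
  have hmaj : Summable (fun p : ℕ × ℕ => 2 * ((1/2:ℝ) ^ p.1 * (1/2:ℝ) ^ p.2)) :=
    (Summable.mul_of_nonneg summable_geometric_two summable_geometric_two
      (fun n => by positivity) (fun n => by positivity)).mul_left 2
  refine Summable.of_nonneg_of_le (fun p => by positivity) (fun p => ?_) hmaj
  have hb : ‖(inner ℂ ((projS (x '' σ) - projS (x '' τ)) (x p.1)) (x p.2) : ℂ)‖ ≤ 2 := by
    calc ‖(inner ℂ ((projS (x '' σ) - projS (x '' τ)) (x p.1)) (x p.2) : ℂ)‖
        ≤ ‖(projS (x '' σ) - projS (x '' τ)) (x p.1)‖ * ‖x p.2‖ := norm_inner_le_norm _ _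
      _ ≤ 2 := by
          rw [hnorm, mul_one, ContinuousLinearMap.sub_apply]
          calc ‖projS (x '' σ) (x p.1) - projS (x '' τ) (x p.1)‖
              ≤ ‖projS (x '' σ) (x p.1)‖ + ‖projS (x '' τ) (x p.1)‖ := norm_sub_le _ _
            _ ≤ ‖x p.1‖ + ‖x p.1‖ := add_le_add (norm_projS_apply_le _ _) (norm_projS_apply_le _ _)
            _ = 2 := by rw [hnorm]; norm_num
  have h2 : 2 * ((1/2:ℝ) ^ p.1 * (1/2:ℝ) ^ p.2) = 2 / 2 ^ (p.1 + p.2) := by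
    rw [pow_add, one_div, inv_pow, inv_pow]
    field_simp
  rw [h2]
  exact div_le_div_of_nonneg_right hb (by positivity) |>.trans_eq rfl

/-- For a normalized complete minimal system, the inverse of `σ ↦ P_σ` is uniformly
continuous from the projections with the weak-operator metric `d_w` to `𝔓(ℕ)` with `ρ`. -/
theorem inverse_proj_map_uniformly_continuous [TopologicalSpace.SeparableSpace H]
    (x : ℕ → H) (hc : IsCompleteSystem x) (hmin : IsMinimalSystem x)
    (hnorm : ∀ k, ‖x k‖ = 1) :
    ∀ ε > 0, ∃ δ > 0, ∀ σ τ : Set ℕ,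
      dW x (projS (x '' σ)) (projS (x '' τ)) < δ → rhoMetric σ τ < ε := by
  intro ε hε
  obtain ⟨N0, hN0⟩ := exists_pow_lt_of_lt_one (half_pos hε) (by norm_num : (1/2:ℝ) < 1)
  set N := N0 + 1 with hN
  set c : ℕ → ℝ := fun k => Metric.infDist (x k) (clSpan (x '' {j | j ≠ k}) : Set H) with hcdef
  have hc0 : ∀ k, 0 < c k := infDist_min_pos x hmin
  have hNne : (Finset.range N).Nonempty := ⟨0, by simp [hN]⟩
  set δ := (Finset.range N).inf' hNne (fun k => c k ^ 2 / 2 ^ (k + k)) with hδ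
  have hδpos : 0 < δ := by
    rw [hδ, Finset.lt_inf'_iff]
    intro k _
    have := hc0 k
    positivity
  refine ⟨δ, hδpos, fun σ τ hd => ?_⟩
  have hsummable := dW_summable x hnorm σ τ
  have hagree : ∀ k < N, (k ∈ σ ↔ k ∈ τ) := by
    intro k hkN
    by_contra hne
    have hterm : c k ^ 2 ≤
        ‖(inner ℂ ((projS (x '' σ) - projS (x '' τ)) (x k)) (x k) : ℂ)‖ := by
      rcases Classical.em (k ∈ σ) with hkσ | hkσ
      · have hkτ : k ∉ τ := fun h => hne ⟨fun _ => h, fun _ => hkσ⟩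
        exact key_lower x hkσ hkτ
      · have hkτ : k ∈ τ := by
          by_contra hkτ
          exact hne ⟨fun h => absurd h hkσ, fun h => absurd h hkτ⟩
        have h := key_lower x hkτ hkσ
        have heq : ((projS (x '' σ) - projS (x '' τ)) (x k))
            = -((projS (x '' τ) - projS (x '' σ)) (x k)) := by
          simp [ContinuousLinearMap.sub_apply]
        rw [heq, inner_neg_left, norm_neg]
        exact h
    have hle : c k ^ 2 / 2 ^ (k + k) ≤ dW x (projS (x '' σ)) (projS (x '' τ)) := by
      have := Summable.le_tsum hsummable (k, k) (fun j _ => by positivity)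
      refine le_trans ?_ this
      exact div_le_div_of_nonneg_right hterm (by positivity)
    have hδle : δ ≤ c k ^ 2 / 2 ^ (k + k) :=
      Finset.inf'_le _ (Finset.mem_range.mpr hkN)
    linarith
  -- now bound rhoMetric
  set f : ℕ → ℝ := fun k =>
    |σ.indicator (fun _ => (1:ℝ)) k - τ.indicator (fun _ => (1:ℝ)) k| / 2 ^ k with hf
  have hfle : ∀ k, f k ≤ (1/2:ℝ) ^ k := by
    intro k
    have h1 : |σ.indicator (fun _ => (1:ℝ)) k - τ.indicator (fun _ => (1:ℝ)) k| ≤ 1 := by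
      by_cases h1 : k ∈ σ <;> by_cases h2 : k ∈ τ <;>
        simp [Set.indicator_of_mem, Set.indicator_of_notMem, h1, h2]
    have h2 : ((1:ℝ)/2) ^ k = 1 / 2 ^ k := by rw [div_pow, one_pow]
    rw [hf, h2]
    exact div_le_div_of_nonneg_right h1 (by positivity)
  have hfsum : Summable f :=
    Summable.of_nonneg_of_le (fun k => by positivity) hfle summable_geometric_two
  have hf0 : ∀ k < N, f k = 0 := by
    intro k hk
    have := hagree k hk
    by_cases h1 : k ∈ σ
    · have h2 : k ∈ τ := this.mp h1
      simp [hf, Set.indicator_of_mem, h1, h2]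
    · have h2 : k ∉ τ := fun h => h1 (this.mpr h)
      simp [hf, Set.indicator_of_notMem, h1, h2]
  have hrho : rhoMetric σ τ = ∑' i : ℕ, f (i + N) := by
    have := Summable.sum_add_tsum_nat_add (f := f) N hfsum
    have hzero : ∑ i ∈ Finset.range N, f i = 0 :=
      Finset.sum_eq_zero (fun i hi => hf0 i (Finset.mem_range.mp hi))
    rw [rhoMetric]
    rw [← this, hzero, zero_add]
  have htail : ∑' i : ℕ, f (i + N) ≤ (1/2:ℝ) ^ N * 2 := by
    have hshift : Summable (fun i => f (i + N)) := (summable_nat_add_iff N).mpr hfsum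
    have hmaj : Summable (fun i : ℕ => (1/2:ℝ) ^ (i + N)) :=
      (summable_nat_add_iff N).mpr summable_geometric_two
    calc ∑' i : ℕ, f (i + N) ≤ ∑' i : ℕ, (1/2:ℝ) ^ (i + N) :=
          Summable.tsum_le_tsum (fun i => hfle (i + N)) hshift hmaj
      _ = (1/2:ℝ) ^ N * ∑' i : ℕ, (1/2:ℝ) ^ i := by
          rw [← tsum_mul_left]
          exact tsum_congr (fun i => by rw [pow_add]; ring)
      _ = (1/2:ℝ) ^ N * 2 := by rw [tsum_geometric_two]
  have hfinal : (1/2:ℝ) ^ N * 2 < ε := by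
    have : (1/2:ℝ) ^ N = (1/2:ℝ) ^ N0 * (1/2) := by rw [hN, pow_succ]
    rw [this]
    linarith
  rw [hrho]
  exact lt_of_le_of_lt htail hfinal
end
end
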